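/- arXiv:2501.17795 — 2 statements merged into one kernel-verified Lean document; each statement's English description precedes it below -/
import Mathlib

section
/- Let C, r > 0 and let X and Y be ℝ^d-valued random variables defined on the same probability space with |X − Y| < Cr almost surely. Let U and V be independent random variables, each uniformly distributed on [−r/2, r/2]^d and independent of (X, Y), and assume the differential entropies H(X + U) and H(Y + V) are finite. Then |H^ξ(X; r) − H^ξ(Y; r)| ≤ d log(2C + 4), i.e. |H(X + U) − H(Y + V)| ≤ d log(2C + 4). -/
open MeasureTheory ProbabilityTheory
open scoped ENNReal

/-- The differential entropy `H(η) = −∫ f log f` of a measure `η` on `ℝ^d`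
with Lebesgue density `f = dη/d(vol)`. -/
noncomputable def diffEntropy {d : ℕ} (η : Measure (EuclideanSpace ℝ (Fin d))) : ℝ :=
  -∫ x, ((η.rnDeriv volume x).toReal * Real.log (η.rnDeriv volume x).toReal)

/-- The uniform probability measure on the cube `[−r/2, r/2]^d`. -/
noncomputable def cubeUniform (d : ℕ) (r : ℝ) : Measure (EuclideanSpace ℝ (Fin d)) :=
  (volume {x : EuclideanSpace ℝ (Fin d) | ∀ i, |x i| ≤ r / 2})⁻¹ •
    volume.restrict {x : EuclideanSpace ℝ (Fin d) | ∀ i, |x i| ≤ r / 2}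

section Aux

variable {d : ℕ}

lemma cube_measurableSet (s : ℝ) :
    MeasurableSet {x : EuclideanSpace ℝ (Fin d) | ∀ i, |x i| ≤ s} := by
  have : {x : EuclideanSpace ℝ (Fin d) | ∀ i, |x i| ≤ s} =
      ⋂ i, {x | |x i| ≤ s} := by ext x; simp [Set.mem_iInter]
  rw [this]
  exact MeasurableSet.iInter fun i =>
    measurableSet_le (by fun_prop) measurable_const

lemma volume_cube (s : ℝ) :
    volume {x : EuclideanSpace ℝ (Fin d) | ∀ i, |x i| ≤ s} = (ENNReal.ofReal (2*s))^d := by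
  have h := (EuclideanSpace.volume_preserving_symm_measurableEquiv_toLp (Fin d)).measure_preimage
    (s := Set.univ.pi fun _ : Fin d => Set.Icc (-s) s)
    (MeasurableSet.univ_pi fun _ => measurableSet_Icc).nullMeasurableSet
  have heq : ((MeasurableEquiv.toLp 2 (Fin d → ℝ)).symm) ⁻¹'
      (Set.univ.pi fun _ : Fin d => Set.Icc (-s) s)
      = {x : EuclideanSpace ℝ (Fin d) | ∀ i, |x i| ≤ s} := by
    ext x
    simp only [Set.mem_preimage,
      Set.mem_pi, Set.mem_univ, Set.mem_Icc, forall_true_left, Set.mem_setOf_eq, abs_le]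
    rfl
  rw [heq] at h
  rw [h, volume_pi_pi]
  simp only [Real.volume_Icc]
  rw [Finset.prod_const]
  congr 1
  · rw [sub_neg_eq_add]
    ring_nf
  · simp

lemma volume_cube_r (r : ℝ) :
    volume {x : EuclideanSpace ℝ (Fin d) | ∀ i, |x i| ≤ r / 2} = (ENNReal.ofReal r)^d := by
  have h2 : 2 * (r / 2) = r := by ring
  rw [volume_cube, h2]

lemma cube_vol_ne_zero (r : ℝ) (hr : 0 < r) :
    volume {x : EuclideanSpace ℝ (Fin d) | ∀ i, |x i| ≤ r / 2} ≠ 0 := by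
  rw [volume_cube_r]
  simp [pow_eq_zero_iff', ENNReal.ofReal_eq_zero, not_le, hr]

lemma cube_vol_ne_top (r : ℝ) :
    volume {x : EuclideanSpace ℝ (Fin d) | ∀ i, |x i| ≤ r / 2} ≠ ∞ := by
  rw [volume_cube_r]
  exact ENNReal.pow_ne_top ENNReal.ofReal_ne_top

lemma abs_coord_le_norm (x : EuclideanSpace ℝ (Fin d)) (i : Fin d) : |x i| ≤ ‖x‖ := by
  rw [EuclideanSpace.norm_eq x]
  have h1 : |x i| = Real.sqrt (|x i|^2) := by
    rw [Real.sqrt_sq_eq_abs]; simp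
  rw [h1]
  apply Real.sqrt_le_sqrt
  rw [sq_abs]
  calc x i ^ 2 ≤ ∑ j, x j ^ 2 :=
        Finset.single_le_sum (f := fun j => x j ^ 2) (fun j _ => sq_nonneg _) (Finset.mem_univ i)
    _ = ∑ j, ‖x j‖ ^ 2 := by simp [Real.norm_eq_abs, sq_abs]

instance cubeUniform_isProbability (r : ℝ) [Fact (0 < r)] :
    IsProbabilityMeasure (cubeUniform d r) := by
  constructor
  rw [cubeUniform, Measure.smul_apply, smul_eq_mul,
    Measure.restrict_apply MeasurableSet.univ, Set.univ_inter]
  exact ENNReal.inv_mul_cancel (cube_vol_ne_zero r (Fact.out)) (cube_vol_ne_top r)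

lemma real_key {p f g rd V : ℝ} (hrd : 0 < rd) (hV : 0 < V) (hp : 0 ≤ p)
    (hpf : rd * p ≤ f) (hpg : rd * p ≤ g) (hg0 : 0 ≤ g) :
    p * Real.log g - p * Real.log f ≤ g / V - p + p * Real.log (V / rd) := by
  rcases eq_or_lt_of_le hp with h | h
  · rw [← h]
    simp only [zero_mul, sub_zero, add_zero, mul_zero, zero_add]
    positivity
  · have hf0 : 0 < f := lt_of_lt_of_le (by positivity) hpf
    have hg0' : 0 < g := lt_of_lt_of_le (by positivity) hpg
    have h1 : Real.log (rd * p) ≤ Real.log f := Real.log_le_log (by positivity) hpf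
    have step1 : p * Real.log g - p * Real.log f ≤ p * Real.log (g / (rd * p)) := by
      rw [Real.log_div hg0'.ne' (by positivity)]
      nlinarith [h1]
    have hx : (0:ℝ) < g / (rd * p) := by positivity
    have step2 : Real.log (g / (rd * p)) ≤ (g / (rd * p)) * (rd / V) - 1 - Real.log (rd / V) := by
      have := Real.log_le_sub_one_of_pos (x := (g / (rd * p)) * (rd / V)) (by positivity)
      rw [Real.log_mul hx.ne' (by positivity)] at this
      linarith
    have hlog : Real.log (rd / V) = - Real.log (V / rd) := by
      rw [← Real.log_inv]; congr 1; field_simp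
    calc p * Real.log g - p * Real.log f ≤ p * Real.log (g / (rd * p)) := step1
      _ ≤ p * ((g / (rd * p)) * (rd / V) - 1 - Real.log (rd / V)) := by
          apply mul_le_mul_of_nonneg_left step2 h.le
      _ = g / V - p + p * Real.log (V / rd) := by
          rw [hlog]; field_simp; ring

end Aux

section Main

variable {d : ℕ}

local notation "E" => EuclideanSpace ℝ (Fin d)

lemma main_ineq (f g : E → ℝ≥0∞) (p : E × E → ℝ≥0∞)
    (hf : Measurable f) (hg : Measurable g) (hp : Measurable p)
    (hffin : ∀ z, f z ≠ ∞) (hgfin : ∀ w, g w ≠ ∞) (hpfin : ∀ q, p q ≠ ∞)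
    (rd V : ℝ) (hrd : 0 < rd) (hV : 0 < V)
    (hmargf : ∀ z, ∫⁻ w, p (z, w) = f z)
    (hmargg : ∀ w, ∫⁻ z, p (z, w) = g w)
    (hpf : ∀ z w, ENNReal.ofReal rd * p (z, w) ≤ f z)
    (hpg : ∀ z w, ENNReal.ofReal rd * p (z, w) ≤ g w)
    (S : Set (E × E)) (hS : MeasurableSet S)
    (hsupp : ∀ q, p q ≠ 0 → q ∈ S)
    (hvolS : ∀ w, volume {z | (z, w) ∈ S} = ENNReal.ofReal V)
    (hg1 : ∫⁻ w, g w = 1)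
    (hintf : Integrable (fun z => (f z).toReal * Real.log (f z).toReal))
    (hintg : Integrable (fun w => (g w).toReal * Real.log (g w).toReal)) :
    (∫ w, (g w).toReal * Real.log (g w).toReal) -
      (∫ z, (f z).toReal * Real.log (f z).toReal) ≤ Real.log (V / rd) := by
  set pi2 : Measure (E × E) := (volume : Measure E).prod volume with hpi2
  set oV : ℝ≥0∞ := ENNReal.ofReal V with hoV
  have hoV0 : oV ≠ 0 := by simp [hoV, hV]
  have hoVtop : oV ≠ ∞ := ENNReal.ofReal_ne_top
  -- total masses
  have hpπ : ∫⁻ q, p q ∂pi2 = 1 := by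
    rw [lintegral_prod_symm _ hp.aemeasurable]
    simp only [hmargg]
    exact hg1
  have hf1 : ∫⁻ z, f z = 1 := by
    rw [← hpπ, lintegral_prod _ hp.aemeasurable]
    simp only [hmargf]
  -- the indicator auxiliary function T
  set T : E × E → ℝ≥0∞ := S.indicator (fun q => g q.2 / oV) with hT
  have hTmeas : Measurable T := ((hg.comp measurable_snd).div_const oV).indicator hS
  have hTfin : ∀ q, T q ≠ ∞ := by
    intro q
    rw [hT]
    by_cases hq : q ∈ S
    · simp only [Set.indicator_of_mem hq]
      exact (ENNReal.div_lt_top (hgfin q.2) hoV0).ne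
    · simp [Set.indicator_of_notMem hq]
  have hT1 : ∫⁻ q, T q ∂pi2 = 1 := by
    rw [lintegral_prod_symm _ hTmeas.aemeasurable]
    have : ∀ w, ∫⁻ z, T (z, w) ∂volume = g w := by
      intro w
      have : (fun z => T (z, w)) = fun z => {z | (z, w) ∈ S}.indicator (fun _ => g w / oV) z := by
        funext z
        by_cases hz : (z, w) ∈ S
        · simp [hT, Set.indicator_of_mem, hz]
        · simp [hT, Set.indicator_of_notMem, hz]
      rw [this, lintegral_indicator, setLIntegral_const, hvolS w]
      · exact ENNReal.div_mul_cancel hoV0 hoVtop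
      · have : {z | (z, w) ∈ S} = (fun z => (z, w)) ⁻¹' S := rfl
        rw [this]
        exact hS.preimage (measurable_id.prodMk measurable_const)
    simp only [this]
    exact hg1
  -- helper for nnnorm computations
  have hnn : ∀ (x : ℝ≥0∞), x ≠ ∞ → ∀ (a : ℝ),
      (‖x.toReal * a‖₊ : ℝ≥0∞) = x * ‖a‖₊ := by
    intro x hx a
    rw [nnnorm_mul, ENNReal.coe_mul]
    congr 1
    rw [← enorm_eq_nnnorm, ← ofReal_norm, Real.norm_of_nonneg ENNReal.toReal_nonneg,
      ENNReal.ofReal_toReal hx]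
  have hnn1 : ∀ (x : ℝ≥0∞), x ≠ ∞ → (‖x.toReal‖₊ : ℝ≥0∞) = x := by
    intro x hx
    have := hnn x hx 1
    simpa using this
  -- integrability of pr
  have Ip : Integrable (fun q => (p q).toReal) pi2 :=
    integrable_toReal_of_lintegral_ne_top hp.aemeasurable (by rw [hpπ]; exact ENNReal.one_ne_top)
  have Ipval : ∫ q, (p q).toReal ∂pi2 = 1 := by
    rw [integral_toReal hp.aemeasurable
      (Filter.Eventually.of_forall fun q => lt_top_iff_ne_top.2 (hpfin q)), hpπ]
    simp
  -- integrability of Tr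
  have IT : Integrable (fun q => (T q).toReal) pi2 :=
    integrable_toReal_of_lintegral_ne_top hTmeas.aemeasurable (by rw [hT1]; exact ENNReal.one_ne_top)
  have ITval : ∫ q, (T q).toReal ∂pi2 = 1 := by
    rw [integral_toReal hTmeas.aemeasurable
      (Filter.Eventually.of_forall fun q => lt_top_iff_ne_top.2 (hTfin q)), hT1]
    simp
  -- integrability of pr * log gr
  have measg : Measurable fun q : E × E => (p q).toReal * Real.log (g q.2).toReal :=
    hp.ennreal_toReal.mul
      ((Real.measurable_log.comp hg.ennreal_toReal).comp measurable_snd)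
  have measf : Measurable fun q : E × E => (p q).toReal * Real.log (f q.1).toReal :=
    hp.ennreal_toReal.mul
      ((Real.measurable_log.comp hf.ennreal_toReal).comp measurable_fst)
  have hg_nn : ∫⁻ q, ‖(p q).toReal * Real.log (g q.2).toReal‖₊ ∂pi2
      = ∫⁻ w, ‖(g w).toReal * Real.log (g w).toReal‖₊ ∂volume := by
    have e1 : ∀ q : E × E, (‖(p q).toReal * Real.log (g q.2).toReal‖₊ : ℝ≥0∞)
        = p q * ‖Real.log (g q.2).toReal‖₊ := fun q => hnn _ (hpfin q) _
    simp only [e1]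
    have m1 : Measurable fun q : E × E => p q * (‖Real.log (g q.2).toReal‖₊ : ℝ≥0∞) :=
      hp.mul ((measurable_coe_nnreal_ennreal.comp (measurable_nnnorm.comp
        (Real.measurable_log.comp hg.ennreal_toReal))).comp measurable_snd)
    rw [lintegral_prod_symm _ m1.aemeasurable]
    congr 1
    funext w
    show ∫⁻ z, p (z, w) * (‖Real.log (g w).toReal‖₊ : ℝ≥0∞) = _
    have mz : Measurable fun z : E => p (z, w) := hp.comp (measurable_id.prodMk measurable_const)
    rw [lintegral_mul_const _ mz, hmargg w]
    rw [hnn _ (hgfin w) _]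
  have Ig : Integrable (fun q => (p q).toReal * Real.log (g q.2).toReal) pi2 := by
    refine ⟨measg.aestronglyMeasurable, ?_⟩
    simp only [hasFiniteIntegral_def, enorm_eq_nnnorm, hg_nn]
    exact hintg.2
  have hf_nn : ∫⁻ q, ‖(p q).toReal * Real.log (f q.1).toReal‖₊ ∂pi2
      = ∫⁻ z, ‖(f z).toReal * Real.log (f z).toReal‖₊ ∂volume := by
    have e1 : ∀ q : E × E, (‖(p q).toReal * Real.log (f q.1).toReal‖₊ : ℝ≥0∞)
        = p q * ‖Real.log (f q.1).toReal‖₊ := fun q => hnn _ (hpfin q) _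
    simp only [e1]
    have m1 : Measurable fun q : E × E => p q * (‖Real.log (f q.1).toReal‖₊ : ℝ≥0∞) :=
      hp.mul ((measurable_coe_nnreal_ennreal.comp (measurable_nnnorm.comp
        (Real.measurable_log.comp hf.ennreal_toReal))).comp measurable_fst)
    rw [lintegral_prod _ m1.aemeasurable]
    congr 1
    funext z
    show ∫⁻ w, p (z, w) * (‖Real.log (f z).toReal‖₊ : ℝ≥0∞) = _
    have mw : Measurable fun w : E => p (z, w) := hp.comp (measurable_const.prodMk measurable_id)
    rw [lintegral_mul_const _ mw, hmargf z]
    rw [hnn _ (hffin z) _]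
  have If : Integrable (fun q => (p q).toReal * Real.log (f q.1).toReal) pi2 := by
    refine ⟨measf.aestronglyMeasurable, ?_⟩
    simp only [hasFiniteIntegral_def, enorm_eq_nnnorm, hf_nn]
    exact hintf.2
  -- values of the two integrals
  have Igval : ∫ q, (p q).toReal * Real.log (g q.2).toReal ∂pi2
      = ∫ w, (g w).toReal * Real.log (g w).toReal := by
    rw [integral_prod_symm _ Ig]
    congr 1
    funext w
    show ∫ z, (p (z, w)).toReal * Real.log (g w).toReal = _
    have mz : AEMeasurable (fun z : E => p (z, w)) volume :=
      (hp.comp (measurable_id.prodMk measurable_const)).aemeasurable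
    rw [integral_mul_const, integral_toReal mz
      (Filter.Eventually.of_forall fun z => lt_top_iff_ne_top.2 (hpfin (z, w))), hmargg w]
  have Ifval : ∫ q, (p q).toReal * Real.log (f q.1).toReal ∂pi2
      = ∫ z, (f z).toReal * Real.log (f z).toReal := by
    rw [integral_prod _ If]
    congr 1
    funext z
    show ∫ w, (p (z, w)).toReal * Real.log (f z).toReal = _
    have mw : AEMeasurable (fun w : E => p (z, w)) volume :=
      (hp.comp (measurable_const.prodMk measurable_id)).aemeasurable
    rw [integral_mul_const, integral_toReal mw
      (Filter.Eventually.of_forall fun w => lt_top_iff_ne_top.2 (hpfin (z, w))), hmargf z]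
  -- pointwise inequality
  set K : ℝ := Real.log (V / rd) with hK
  have hpt : ∀ q : E × E,
      (p q).toReal * Real.log (g q.2).toReal - (p q).toReal * Real.log (f q.1).toReal
        ≤ (T q).toReal - (p q).toReal + (p q).toReal * K := by
    intro q
    by_cases hq : p q = 0
    · simp only [hq, ENNReal.toReal_zero, zero_mul, sub_zero, add_zero, sub_self]
      exact ENNReal.toReal_nonneg
    · have hqS : q ∈ S := hsupp q hq
      have hTq : (T q).toReal = (g q.2).toReal / V := by
        rw [hT]
        simp only [Set.indicator_of_mem hqS]
        rw [ENNReal.toReal_div, hoV, ENNReal.toReal_ofReal hV.le]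
      rw [hTq]
      refine real_key hrd hV ENNReal.toReal_nonneg ?_ ?_ ENNReal.toReal_nonneg
      · have h1 := hpf q.1 q.2
        have h2 : (ENNReal.ofReal rd * p (q.1, q.2)).toReal ≤ (f q.1).toReal :=
          ENNReal.toReal_mono (hffin _) h1
        rw [ENNReal.toReal_mul, ENNReal.toReal_ofReal hrd.le] at h2
        simpa using h2
      · have h1 := hpg q.1 q.2
        have h2 : (ENNReal.ofReal rd * p (q.1, q.2)).toReal ≤ (g q.2).toReal :=
          ENNReal.toReal_mono (hgfin _) h1
        rw [ENNReal.toReal_mul, ENNReal.toReal_ofReal hrd.le] at h2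
        simpa using h2
  -- put it together
  have hmono := integral_mono (Ig.sub If) ((IT.sub Ip).add (Ip.mul_const K)) hpt
  simp only [Pi.sub_apply, Pi.add_apply] at hmono
  rw [integral_sub Ig If, Igval, Ifval] at hmono
  have I1 : Integrable (fun q => (T q).toReal - (p q).toReal) pi2 := IT.sub Ip
  have I2 : Integrable (fun q => (p q).toReal * K) pi2 := Ip.mul_const K
  rw [integral_add I1 I2, integral_sub IT Ip,
    integral_mul_const, ITval, Ipval] at hmono
  simpa using hmono

end Main

section Helpers

variable {d : ℕ}

lemma lint_ind_set {α : Type*} [MeasurableSpace α] (ν : Measure α)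
    (g : α → EuclideanSpace ℝ (Fin d)) (hg : Measurable g)
    (S : Set (EuclideanSpace ℝ (Fin d))) (hS : MeasurableSet S) :
    ∫⁻ a, S.indicator 1 (g a) ∂ν = ν {a | g a ∈ S} := by
  rw [show {a | g a ∈ S} = g ⁻¹' S from rfl, ← lintegral_indicator_one (hS.preimage hg)]
  exact lintegral_congr fun a => by by_cases h : g a ∈ S <;> simp [Set.indicator, h]

lemma lint_translate (b : EuclideanSpace ℝ (Fin d))
    (S : Set (EuclideanSpace ℝ (Fin d))) (hS : MeasurableSet S) :
    ∫⁻ w, S.indicator 1 (w - b) ∂volume = volume S := by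
  rw [lint_ind_set volume (fun w => w - b) (measurable_id.sub measurable_const) S hS]
  have : {w : EuclideanSpace ℝ (Fin d) | w - b ∈ S} = (fun w => w + (-b)) ⁻¹' S := by
    ext w
    simp [sub_eq_add_neg]
  rw [this, measure_preimage_add_right]

lemma marg_lemma
    (ν : Measure (EuclideanSpace ℝ (Fin d) × EuclideanSpace ℝ (Fin d)))
    [IsProbabilityMeasure ν]
    (Qs : Set (EuclideanSpace ℝ (Fin d))) (hQmeas : MeasurableSet Qs)
    (φ ψ : EuclideanSpace ℝ (Fin d) × EuclideanSpace ℝ (Fin d) → EuclideanSpace ℝ (Fin d))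
    (hφ : Measurable φ) (hψ : Measurable ψ) (z : EuclideanSpace ℝ (Fin d)) :
    ∫⁻ w, ν {ab | z - φ ab ∈ Qs ∧ w - ψ ab ∈ Qs} ∂volume
      = volume Qs * ν {ab | z - φ ab ∈ Qs} := by
  have hBmeas : ∀ w, MeasurableSet {ab : EuclideanSpace ℝ (Fin d) × EuclideanSpace ℝ (Fin d) |
      z - φ ab ∈ Qs ∧ w - ψ ab ∈ Qs} := by
    intro w
    exact (hQmeas.preimage (measurable_const.sub hφ)).inter
      (hQmeas.preimage (measurable_const.sub hψ))
  have step1 : ∀ w, ν {ab | z - φ ab ∈ Qs ∧ w - ψ ab ∈ Qs}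
      = ∫⁻ ab, Qs.indicator 1 (z - φ ab) * Qs.indicator 1 (w - ψ ab) ∂ν := by
    intro w
    rw [← lintegral_indicator_one (hBmeas w)]
    refine lintegral_congr fun ab => ?_
    by_cases h1 : z - φ ab ∈ Qs <;> by_cases h2 : w - ψ ab ∈ Qs <;>
      simp [Set.indicator, h1, h2]
  simp only [step1]
  rw [lintegral_lintegral_swap]
  · have inner : ∀ ab : EuclideanSpace ℝ (Fin d) × EuclideanSpace ℝ (Fin d),
        ∫⁻ w, Qs.indicator 1 (z - φ ab) * Qs.indicator 1 (w - ψ ab) ∂volume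
          = Qs.indicator 1 (z - φ ab) * volume Qs := by
      intro ab
      have m : Measurable fun w : EuclideanSpace ℝ (Fin d) =>
          Qs.indicator (1 : EuclideanSpace ℝ (Fin d) → ℝ≥0∞) (w - ψ ab) :=
        (measurable_one.indicator hQmeas).comp (measurable_id.sub measurable_const)
      rw [lintegral_const_mul _ m, lint_translate (ψ ab) Qs hQmeas]
    simp only [inner]
    have m2 : Measurable fun ab : EuclideanSpace ℝ (Fin d) × EuclideanSpace ℝ (Fin d) =>
        Qs.indicator (1 : EuclideanSpace ℝ (Fin d) → ℝ≥0∞) (z - φ ab) :=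
      (measurable_one.indicator hQmeas).comp (measurable_const.sub hφ)
    rw [lintegral_mul_const _ m2, lint_ind_set ν (fun ab => z - φ ab)
      (measurable_const.sub hφ) Qs hQmeas]
    exact mul_comm _ _
  · apply Measurable.aemeasurable
    have ma : Measurable fun q : EuclideanSpace ℝ (Fin d) ×
        (EuclideanSpace ℝ (Fin d) × EuclideanSpace ℝ (Fin d)) =>
        Qs.indicator (1 : EuclideanSpace ℝ (Fin d) → ℝ≥0∞) (z - φ q.2) :=
      (measurable_one.indicator hQmeas).comp (measurable_const.sub (hφ.comp measurable_snd))
    have mb : Measurable fun q : EuclideanSpace ℝ (Fin d) ×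
        (EuclideanSpace ℝ (Fin d) × EuclideanSpace ℝ (Fin d)) =>
        Qs.indicator (1 : EuclideanSpace ℝ (Fin d) → ℝ≥0∞) (q.1 - ψ q.2) :=
      (measurable_one.indicator hQmeas).comp (measurable_fst.sub (hψ.comp measurable_snd))
    exact ma.mul mb

lemma map_add_unif
    (ν : Measure (EuclideanSpace ℝ (Fin d) × EuclideanSpace ℝ (Fin d)))
    [IsProbabilityMeasure ν]
    (ξ : Measure (EuclideanSpace ℝ (Fin d))) [IsProbabilityMeasure ξ]
    (Qs : Set (EuclideanSpace ℝ (Fin d))) (hQmeas : MeasurableSet Qs)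
    (hξ : ξ = (volume Qs)⁻¹ • volume.restrict Qs)
    (φ : EuclideanSpace ℝ (Fin d) × EuclideanSpace ℝ (Fin d) → EuclideanSpace ℝ (Fin d))
    (hφ : Measurable φ) :
    (ν.prod ξ).map
        (fun q : (EuclideanSpace ℝ (Fin d) × EuclideanSpace ℝ (Fin d)) ×
          EuclideanSpace ℝ (Fin d) => φ q.1 + q.2) =
      volume.withDensity (fun z => (volume Qs)⁻¹ * ν {ab | z - φ ab ∈ Qs}) := by
  set c : ℝ≥0∞ := volume Qs with hc
  have hsetmeas : ∀ z, MeasurableSet {ab :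
      EuclideanSpace ℝ (Fin d) × EuclideanSpace ℝ (Fin d) | z - φ ab ∈ Qs} := fun z =>
    hQmeas.preimage (measurable_const.sub hφ)
  have hind : ∀ z, ν {ab | z - φ ab ∈ Qs} = ∫⁻ ab, Qs.indicator 1 (z - φ ab) ∂ν := by
    intro z
    rw [← lintegral_indicator_one (hsetmeas z)]
    exact lintegral_congr fun ab => by by_cases h : z - φ ab ∈ Qs <;> simp [Set.indicator, h]
  have hTmeas : Measurable fun q : (EuclideanSpace ℝ (Fin d) × EuclideanSpace ℝ (Fin d)) ×
      EuclideanSpace ℝ (Fin d) => φ q.1 + q.2 := (hφ.comp measurable_fst).add measurable_snd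
  ext s hs
  rw [Measure.map_apply hTmeas hs, Measure.prod_apply (hTmeas hs),
    withDensity_apply _ hs]
  have step1 : ∀ ab : EuclideanSpace ℝ (Fin d) × EuclideanSpace ℝ (Fin d),
      ξ (Prod.mk ab ⁻¹' ((fun q :
        (EuclideanSpace ℝ (Fin d) × EuclideanSpace ℝ (Fin d)) × EuclideanSpace ℝ (Fin d) =>
          φ q.1 + q.2) ⁻¹' s))
        = c⁻¹ * volume (s ∩ {z | z - φ ab ∈ Qs}) := by
    intro ab
    have hpre : Prod.mk ab ⁻¹' ((fun q :
        (EuclideanSpace ℝ (Fin d) × EuclideanSpace ℝ (Fin d)) × EuclideanSpace ℝ (Fin d) =>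
          φ q.1 + q.2) ⁻¹' s) = (fun u => φ ab + u) ⁻¹' s := rfl
    rw [hpre, hξ]
    have hBmeas : MeasurableSet ((fun u => φ ab + u) ⁻¹' s) :=
      hs.preimage (measurable_const.add measurable_id)
    rw [Measure.smul_apply, smul_eq_mul, Measure.restrict_apply hBmeas]
    congr 1
    have hset : ((fun u => φ ab + u) ⁻¹' s) ∩ Qs
        = (fun u => φ ab + u) ⁻¹' (s ∩ {z | z - φ ab ∈ Qs}) := by
      ext u
      simp only [Set.mem_inter_iff, Set.mem_preimage, Set.mem_setOf_eq, add_sub_cancel_left]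
    rw [hset, measure_preimage_add]
  simp only [step1]
  have step2 : ∀ ab : EuclideanSpace ℝ (Fin d) × EuclideanSpace ℝ (Fin d),
      c⁻¹ * volume (s ∩ {z | z - φ ab ∈ Qs})
        = ∫⁻ z, c⁻¹ * (s.indicator (fun z => Qs.indicator 1 (z - φ ab)) z) := by
    intro ab
    have hm2 : Measurable fun z : EuclideanSpace ℝ (Fin d) =>
        s.indicator (fun z => Qs.indicator (1 : EuclideanSpace ℝ (Fin d) → ℝ≥0∞)
          (z - φ ab)) z :=
      (((measurable_one.indicator hQmeas).comp (measurable_id.sub measurable_const)).indicator hs)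
    rw [lintegral_const_mul _ hm2]
    congr 1
    have hm3 : MeasurableSet (s ∩ {z : EuclideanSpace ℝ (Fin d) | z - φ ab ∈ Qs}) :=
      hs.inter (hQmeas.preimage (measurable_id.sub measurable_const))
    rw [← lintegral_indicator_one hm3]
    refine lintegral_congr fun z => ?_
    by_cases h1 : z ∈ s <;> by_cases h2 : z - φ ab ∈ Qs <;>
      simp [Set.indicator, h1, h2]
  simp only [step2]
  rw [lintegral_lintegral_swap]
  · rw [← lintegral_indicator hs]
    refine lintegral_congr fun z => ?_
    by_cases h1 : z ∈ s
    · simp only [Set.indicator_of_mem h1]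
      have m : Measurable fun ab : EuclideanSpace ℝ (Fin d) × EuclideanSpace ℝ (Fin d) =>
          Qs.indicator (1 : EuclideanSpace ℝ (Fin d) → ℝ≥0∞) (z - φ ab) :=
        (measurable_one.indicator hQmeas).comp (measurable_const.sub hφ)
      rw [lintegral_const_mul _ m, ← hind z]
    · simp [Set.indicator_of_notMem h1]
  · apply Measurable.aemeasurable
    apply Measurable.const_mul
    have m4 : Measurable fun q : (EuclideanSpace ℝ (Fin d) × EuclideanSpace ℝ (Fin d)) ×
        EuclideanSpace ℝ (Fin d) => Qs.indicator (1 : EuclideanSpace ℝ (Fin d) → ℝ≥0∞)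
          (q.2 - φ q.1) :=
      (measurable_one.indicator hQmeas).comp (measurable_snd.sub (hφ.comp measurable_fst))
    exact m4.indicator (hs.preimage measurable_snd)

end Helpers

/-- if `|X − Y| < Cr` a.s. and `U, V` are independent uniform random
variables on `[−r/2, r/2]^d`, independent of `(X, Y)`, and the differential entropies
of `X + U` and `Y + V` are well defined, then
`|H(X + U) − H(Y + V)| ≤ d log(2C + 4)`. -/
theorem stmt_5 (d : ℕ) (hd : 1 ≤ d) (C r : ℝ) (hC : 0 < C) (hr : 0 < r)
    (Ω : Type) (_ : MeasurableSpace Ω) (μ : Measure Ω) (hμ : IsProbabilityMeasure μ)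
    (X Y U V : Ω → EuclideanSpace ℝ (Fin d))
    (hX : Measurable X) (hY : Measurable Y) (hU : Measurable U) (hV : Measurable V)
    (hclose : ∀ᵐ ω ∂μ, ‖X ω - Y ω‖ < C * r)
    (hUlaw : μ.map U = cubeUniform d r) (hVlaw : μ.map V = cubeUniform d r)
    (hUV : IndepFun U V μ)
    (hUXY : IndepFun U (fun ω => (X ω, Y ω)) μ)
    (hVXY : IndepFun V (fun ω => (X ω, Y ω)) μ)
    (hint1 : Integrable (fun x =>
      (((μ.map (fun ω => X ω + U ω)).rnDeriv volume x).toReal *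
        Real.log ((μ.map (fun ω => X ω + U ω)).rnDeriv volume x).toReal)) volume)
    (hint2 : Integrable (fun x =>
      (((μ.map (fun ω => Y ω + V ω)).rnDeriv volume x).toReal *
        Real.log ((μ.map (fun ω => Y ω + V ω)).rnDeriv volume x).toReal)) volume) :
    |diffEntropy (μ.map (fun ω => X ω + U ω)) - diffEntropy (μ.map (fun ω => Y ω + V ω))|
      ≤ d * Real.log (2 * C + 4) := by
  haveI : Fact (0 < r) := ⟨hr⟩
  set Qs : Set (EuclideanSpace ℝ (Fin d)) := {x | ∀ i, |x i| ≤ r / 2} with hQsdef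
  have hQmeas : MeasurableSet Qs := cube_measurableSet _
  set c : ℝ≥0∞ := volume Qs with hcdef
  have hc0 : c ≠ 0 := cube_vol_ne_zero r hr
  have hctop : c ≠ ∞ := cube_vol_ne_top r
  have hcval : c = (ENNReal.ofReal r) ^ d := volume_cube_r r
  have hQU : cubeUniform d r = c⁻¹ • volume.restrict Qs := rfl
  set ν : Measure (EuclideanSpace ℝ (Fin d) × EuclideanSpace ℝ (Fin d)) :=
    μ.map (fun ω => (X ω, Y ω)) with hνdef
  haveI hνprob : IsProbabilityMeasure ν :=
    Measure.isProbabilityMeasure_map (hX.prodMk hY).aemeasurable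
  -- identification of the laws of X + U and Y + V
  have hmapXU : μ.map (fun ω => X ω + U ω)
      = (ν.prod (cubeUniform d r)).map
          (fun q : (EuclideanSpace ℝ (Fin d) × EuclideanSpace ℝ (Fin d)) ×
            EuclideanSpace ℝ (Fin d) => Prod.fst q.1 + q.2) := by
    have h1 : μ.map (fun ω => ((X ω, Y ω), U ω)) = ν.prod (cubeUniform d r) := by
      rw [← hUlaw, hνdef]
      exact (indepFun_iff_map_prod_eq_prod_map_map (hX.prodMk hY).aemeasurable
        hU.aemeasurable).1 hUXY.symm
    have hT1 : Measurable fun q : (EuclideanSpace ℝ (Fin d) × EuclideanSpace ℝ (Fin d)) ×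
        EuclideanSpace ℝ (Fin d) => q.1.1 + q.2 :=
      (measurable_fst.comp measurable_fst).add measurable_snd
    rw [← h1, Measure.map_map hT1 ((hX.prodMk hY).prodMk hU)]
    rfl
  have hmapYV : μ.map (fun ω => Y ω + V ω)
      = (ν.prod (cubeUniform d r)).map
          (fun q : (EuclideanSpace ℝ (Fin d) × EuclideanSpace ℝ (Fin d)) ×
            EuclideanSpace ℝ (Fin d) => Prod.snd q.1 + q.2) := by
    have h1 : μ.map (fun ω => ((X ω, Y ω), V ω)) = ν.prod (cubeUniform d r) := by
      rw [← hVlaw, hνdef]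
      exact (indepFun_iff_map_prod_eq_prod_map_map (hX.prodMk hY).aemeasurable
        hV.aemeasurable).1 hVXY.symm
    have hT1 : Measurable fun q : (EuclideanSpace ℝ (Fin d) × EuclideanSpace ℝ (Fin d)) ×
        EuclideanSpace ℝ (Fin d) => q.1.2 + q.2 :=
      (measurable_snd.comp measurable_fst).add measurable_snd
    rw [← h1, Measure.map_map hT1 ((hX.prodMk hY).prodMk hV)]
    rfl
  have hdXU : μ.map (fun ω => X ω + U ω)
      = volume.withDensity (fun z => c⁻¹ * ν {ab | z - ab.1 ∈ Qs}) := by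
    rw [hmapXU]
    exact map_add_unif ν (cubeUniform d r) Qs hQmeas hQU Prod.fst measurable_fst
  have hdYV : μ.map (fun ω => Y ω + V ω)
      = volume.withDensity (fun w => c⁻¹ * ν {ab | w - ab.2 ∈ Qs}) := by
    rw [hmapYV]
    exact map_add_unif ν (cubeUniform d r) Qs hQmeas hQU Prod.snd measurable_snd
  set F : EuclideanSpace ℝ (Fin d) → ℝ≥0∞ :=
    fun z => c⁻¹ * ν {ab | z - ab.1 ∈ Qs} with hFdef
  set G : EuclideanSpace ℝ (Fin d) → ℝ≥0∞ :=
    fun w => c⁻¹ * ν {ab | w - ab.2 ∈ Qs} with hGdef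
  set P : EuclideanSpace ℝ (Fin d) × EuclideanSpace ℝ (Fin d) → ℝ≥0∞ :=
    fun q => c⁻¹ * (c⁻¹ * ν {ab | q.1 - ab.1 ∈ Qs ∧ q.2 - ab.2 ∈ Qs}) with hPdef
  -- measurability
  have hFmeas : Measurable F := by
    rw [hFdef]
    exact (measurable_measure_prodMk_left
      (hQmeas.preimage (measurable_fst.sub (measurable_fst.comp measurable_snd)))).const_mul _
  have hGmeas : Measurable G := by
    rw [hGdef]
    exact (measurable_measure_prodMk_left
      (hQmeas.preimage (measurable_fst.sub (measurable_snd.comp measurable_snd)))).const_mul _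
  have hPmeas : Measurable P := by
    rw [hPdef]
    exact (((measurable_measure_prodMk_left
      (((hQmeas.preimage ((measurable_fst.comp measurable_fst).sub
          (measurable_fst.comp measurable_snd)))).inter
        ((hQmeas.preimage ((measurable_snd.comp measurable_fst).sub
          (measurable_snd.comp measurable_snd))))))).const_mul _).const_mul _
  -- finiteness
  have hcinvtop : c⁻¹ ≠ ∞ := ENNReal.inv_ne_top.2 hc0
  have hFfin : ∀ z, F z ≠ ∞ := fun z =>
    ENNReal.mul_ne_top hcinvtop (measure_ne_top ν _)
  have hGfin : ∀ w, G w ≠ ∞ := fun w =>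
    ENNReal.mul_ne_top hcinvtop (measure_ne_top ν _)
  have hPfin : ∀ q, P q ≠ ∞ := fun q =>
    ENNReal.mul_ne_top hcinvtop (ENNReal.mul_ne_top hcinvtop (measure_ne_top ν _))
  -- marginals
  have hmargF : ∀ z, ∫⁻ w, P (z, w) ∂volume = F z := by
    intro z
    show ∫⁻ w, c⁻¹ * (c⁻¹ * ν {ab | z - ab.1 ∈ Qs ∧ w - ab.2 ∈ Qs}) ∂volume
      = c⁻¹ * ν {ab | z - ab.1 ∈ Qs}
    have m : Measurable fun w : EuclideanSpace ℝ (Fin d) =>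
        ν {ab | z - ab.1 ∈ Qs ∧ w - ab.2 ∈ Qs} :=
      measurable_measure_prodMk_left
        ((hQmeas.preimage (measurable_const.sub (measurable_fst.comp measurable_snd))).inter
          (hQmeas.preimage (measurable_fst.sub (measurable_snd.comp measurable_snd))))
    rw [lintegral_const_mul _ (m.const_mul _), lintegral_const_mul _ m,
      marg_lemma ν Qs hQmeas Prod.fst Prod.snd measurable_fst measurable_snd z,
      ← hcdef, ← mul_assoc c⁻¹ c, ENNReal.inv_mul_cancel hc0 hctop, one_mul]
  have hmargG : ∀ w, ∫⁻ z, P (z, w) ∂volume = G w := by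
    intro w
    show ∫⁻ z, c⁻¹ * (c⁻¹ * ν {ab | z - ab.1 ∈ Qs ∧ w - ab.2 ∈ Qs}) ∂volume
      = c⁻¹ * ν {ab | w - ab.2 ∈ Qs}
    have hsetc : ∀ z : EuclideanSpace ℝ (Fin d),
        {ab : EuclideanSpace ℝ (Fin d) × EuclideanSpace ℝ (Fin d) |
          z - ab.1 ∈ Qs ∧ w - ab.2 ∈ Qs}
        = {ab | w - ab.2 ∈ Qs ∧ z - ab.1 ∈ Qs} := fun z => by ext ab; exact and_comm
    simp only [hsetc]
    have m : Measurable fun z : EuclideanSpace ℝ (Fin d) =>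
        ν {ab | w - ab.2 ∈ Qs ∧ z - ab.1 ∈ Qs} :=
      measurable_measure_prodMk_left
        ((hQmeas.preimage (measurable_const.sub (measurable_snd.comp measurable_snd))).inter
          (hQmeas.preimage (measurable_fst.sub (measurable_fst.comp measurable_snd))))
    rw [lintegral_const_mul _ (m.const_mul _), lintegral_const_mul _ m,
      marg_lemma ν Qs hQmeas Prod.snd Prod.fst measurable_snd measurable_fst w,
      ← hcdef, ← mul_assoc c⁻¹ c, ENNReal.inv_mul_cancel hc0 hctop, one_mul]
  -- pointwise domination
  have hor : ENNReal.ofReal (r ^ d) = c := by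
    rw [hcval, ENNReal.ofReal_pow hr.le]
  have hbF : ∀ z w, ENNReal.ofReal (r ^ d) * P (z, w) ≤ F z := by
    intro z w
    show ENNReal.ofReal (r ^ d) * (c⁻¹ * (c⁻¹ * ν {ab | z - ab.1 ∈ Qs ∧ w - ab.2 ∈ Qs}))
      ≤ c⁻¹ * ν {ab | z - ab.1 ∈ Qs}
    rw [hor, ← mul_assoc, ENNReal.mul_inv_cancel hc0 hctop, one_mul]
    exact mul_le_mul_right (measure_mono (fun ab hab => hab.1)) _
  have hbG : ∀ z w, ENNReal.ofReal (r ^ d) * P (z, w) ≤ G w := by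
    intro z w
    show ENNReal.ofReal (r ^ d) * (c⁻¹ * (c⁻¹ * ν {ab | z - ab.1 ∈ Qs ∧ w - ab.2 ∈ Qs}))
      ≤ c⁻¹ * ν {ab | w - ab.2 ∈ Qs}
    rw [hor, ← mul_assoc, ENNReal.mul_inv_cancel hc0 hctop, one_mul]
    exact mul_le_mul_right (measure_mono (fun ab hab => hab.2)) _
  -- the a.s. closeness transferred to ν
  have hνgoodc : ν {ab : EuclideanSpace ℝ (Fin d) × EuclideanSpace ℝ (Fin d) |
      ¬ ‖ab.1 - ab.2‖ < C * r} = 0 := by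
    have hms : MeasurableSet {ab : EuclideanSpace ℝ (Fin d) × EuclideanSpace ℝ (Fin d) |
        ‖ab.1 - ab.2‖ < C * r} :=
      measurableSet_lt ((measurable_fst.sub measurable_snd).norm) measurable_const
    show ν ({ab : EuclideanSpace ℝ (Fin d) × EuclideanSpace ℝ (Fin d) |
      ‖ab.1 - ab.2‖ < C * r}ᶜ) = 0
    rw [hνdef, Measure.map_apply (hX.prodMk hY) hms.compl]
    exact ae_iff.mp hclose
  -- the support set S
  set Sset : Set (EuclideanSpace ℝ (Fin d) × EuclideanSpace ℝ (Fin d)) :=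
    {q | ∀ i, |q.1 i - q.2 i| ≤ (C+1)*r} with hSdef
  have hSmeas : MeasurableSet Sset := by
    rw [hSdef]
    have : {q : EuclideanSpace ℝ (Fin d) × EuclideanSpace ℝ (Fin d) |
        ∀ i, |q.1 i - q.2 i| ≤ (C+1)*r}
        = ⋂ i, {q | |q.1 i - q.2 i| ≤ (C+1)*r} := by ext q; simp [Set.mem_iInter]
    rw [this]
    exact MeasurableSet.iInter fun i => measurableSet_le (by fun_prop) measurable_const
  have hsuppP : ∀ q : EuclideanSpace ℝ (Fin d) × EuclideanSpace ℝ (Fin d),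
      P q ≠ 0 → q ∈ Sset := by
    intro q hq
    have hq' : c⁻¹ * (c⁻¹ * ν {ab | q.1 - ab.1 ∈ Qs ∧ q.2 - ab.2 ∈ Qs}) ≠ 0 := hq
    have hB : ν {ab | q.1 - ab.1 ∈ Qs ∧ q.2 - ab.2 ∈ Qs} ≠ 0 := by
      intro h0
      exact hq' (by rw [h0, mul_zero, mul_zero])
    have hms : MeasurableSet {ab : EuclideanSpace ℝ (Fin d) × EuclideanSpace ℝ (Fin d) |
        ‖ab.1 - ab.2‖ < C * r} :=
      measurableSet_lt ((measurable_fst.sub measurable_snd).norm) measurable_const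
    have key : ν ({ab | q.1 - ab.1 ∈ Qs ∧ q.2 - ab.2 ∈ Qs}
        ∩ {ab | ‖ab.1 - ab.2‖ < C*r}) ≠ 0 := by
      intro h0
      apply hB
      have hsplit := measure_inter_add_diff (μ := ν)
        {ab | q.1 - ab.1 ∈ Qs ∧ q.2 - ab.2 ∈ Qs} hms
      have h2 : ν ({ab | q.1 - ab.1 ∈ Qs ∧ q.2 - ab.2 ∈ Qs}
          \ {ab | ‖ab.1 - ab.2‖ < C*r}) = 0 :=
        le_antisymm (le_trans (measure_mono (fun ab hab => hab.2)) (le_of_eq hνgoodc))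
          zero_le
      rw [← hsplit, h0, h2, add_zero]
    obtain ⟨⟨a, b⟩, ⟨h1, h2⟩, h3⟩ := nonempty_of_measure_ne_zero key
    intro i
    have e1 : |q.1 i - a i| ≤ r/2 := h1 i
    have e2 : |a i - b i| ≤ C * r := le_of_lt (lt_of_le_of_lt (abs_coord_le_norm (a - b) i) h3)
    have e3 : |q.2 i - b i| ≤ r/2 := h2 i
    have e3' : |b i - q.2 i| ≤ r/2 := by rw [abs_sub_comm]; exact e3
    calc |q.1 i - q.2 i| ≤ |q.1 i - a i| + |a i - q.2 i| := abs_sub_le _ _ _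
      _ ≤ |q.1 i - a i| + (|a i - b i| + |b i - q.2 i|) := by
          linarith [abs_sub_le (a i) (b i) (q.2 i)]
      _ ≤ r/2 + (C*r + r/2) := by linarith
      _ = (C+1)*r := by ring
  -- volumes of the sections of S
  have hvolSec : ∀ w, volume {z : EuclideanSpace ℝ (Fin d) | (z, w) ∈ Sset}
      = ENNReal.ofReal ((2*((C+1)*r))^d) := by
    intro w
    have h1 : {z : EuclideanSpace ℝ (Fin d) | (z, w) ∈ Sset}
        = (fun z => z - w) ⁻¹' {x : EuclideanSpace ℝ (Fin d) | ∀ i, |x i| ≤ (C+1)*r} := rfl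
    have h2 : (fun z : EuclideanSpace ℝ (Fin d) => z - w) = fun z => z + (-w) :=
      funext fun z => sub_eq_add_neg z w
    rw [h1, h2, measure_preimage_add_right, volume_cube,
      ENNReal.ofReal_pow (by positivity)]
  have hvolSec2 : ∀ w, volume {z : EuclideanSpace ℝ (Fin d) | (w, z) ∈ Sset}
      = ENNReal.ofReal ((2*((C+1)*r))^d) := by
    intro w
    have h0 : {z : EuclideanSpace ℝ (Fin d) | (w, z) ∈ Sset}
        = {z : EuclideanSpace ℝ (Fin d) | (z, w) ∈ Sset} := by
      ext z
      constructor <;> intro h i <;> { rw [abs_sub_comm]; exact h i }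
    rw [h0]
    exact hvolSec w
  -- total masses
  haveI hprobXU : IsProbabilityMeasure (μ.map (fun ω => X ω + U ω)) :=
    Measure.isProbabilityMeasure_map ((hX.add hU)).aemeasurable
  haveI hprobYV : IsProbabilityMeasure (μ.map (fun ω => Y ω + V ω)) :=
    Measure.isProbabilityMeasure_map ((hY.add hV)).aemeasurable
  have hF1 : ∫⁻ z, F z = 1 := by
    have h := hprobXU.measure_univ
    rw [hdXU, withDensity_apply _ MeasurableSet.univ, setLIntegral_univ] at h
    exact h
  have hG1 : ∫⁻ w, G w = 1 := by
    have h := hprobYV.measure_univ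
    rw [hdYV, withDensity_apply _ MeasurableSet.univ, setLIntegral_univ] at h
    exact h
  -- rnDeriv identification and entropy rewriting
  have hrnF : (μ.map (fun ω => X ω + U ω)).rnDeriv volume =ᵐ[volume] F := by
    rw [hdXU]
    exact Measure.rnDeriv_withDensity volume hFmeas
  have hrnG : (μ.map (fun ω => Y ω + V ω)).rnDeriv volume =ᵐ[volume] G := by
    rw [hdYV]
    exact Measure.rnDeriv_withDensity volume hGmeas
  have haeF : (fun x => (((μ.map (fun ω => X ω + U ω)).rnDeriv volume x).toReal *
      Real.log ((μ.map (fun ω => X ω + U ω)).rnDeriv volume x).toReal))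
      =ᵐ[volume] (fun z => (F z).toReal * Real.log (F z).toReal) :=
    hrnF.mono fun z hz => by simp only [hz]
  have haeG : (fun x => (((μ.map (fun ω => Y ω + V ω)).rnDeriv volume x).toReal *
      Real.log ((μ.map (fun ω => Y ω + V ω)).rnDeriv volume x).toReal))
      =ᵐ[volume] (fun w => (G w).toReal * Real.log (G w).toReal) :=
    hrnG.mono fun w hw => by simp only [hw]
  have hint1' : Integrable (fun z => (F z).toReal * Real.log (F z).toReal) volume :=
    hint1.congr haeF
  have hint2' : Integrable (fun w => (G w).toReal * Real.log (G w).toReal) volume :=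
    hint2.congr haeG
  have hHX : diffEntropy (μ.map (fun ω => X ω + U ω))
      = -∫ z, (F z).toReal * Real.log (F z).toReal := by
    unfold diffEntropy
    rw [integral_congr_ae haeF]
  have hHY : diffEntropy (μ.map (fun ω => Y ω + V ω))
      = -∫ w, (G w).toReal * Real.log (G w).toReal := by
    unfold diffEntropy
    rw [integral_congr_ae haeG]
  -- apply the main inequality in both directions
  have hrd : (0:ℝ) < r ^ d := by positivity
  have hVr : (0:ℝ) < (2*((C+1)*r))^d := by positivity
  have main1 := main_ineq F G P hFmeas hGmeas hPmeas hFfin hGfin hPfin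
    (r ^ d) ((2*((C+1)*r))^d) hrd hVr hmargF hmargG hbF hbG
    Sset hSmeas hsuppP hvolSec hG1 hint1' hint2'
  have hP'meas : Measurable (fun q : EuclideanSpace ℝ (Fin d) × EuclideanSpace ℝ (Fin d) =>
      P (q.2, q.1)) := hPmeas.comp (measurable_snd.prodMk measurable_fst)
  have main2 := main_ineq G F (fun q => P (q.2, q.1)) hGmeas hFmeas hP'meas hGfin hFfin
    (fun q => hPfin (q.2, q.1))
    (r ^ d) ((2*((C+1)*r))^d) hrd hVr
    (fun z => hmargG z) (fun w => hmargF w)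
    (fun z w => hbG w z) (fun z w => hbF w z)
    (Prod.swap ⁻¹' Sset) (hSmeas.preimage measurable_swap)
    (fun q hq => hsuppP (q.2, q.1) hq)
    (fun w => hvolSec2 w) hF1 hint2' hint1'
  -- final arithmetic
  have hdiv : ((2*((C+1)*r))^d) / (r ^ d) = (2*C+2)^d := by
    rw [← div_pow]
    congr 1
    field_simp
  have hlog : Real.log (((2*((C+1)*r))^d) / (r ^ d)) = d * Real.log (2*C+2) := by
    rw [hdiv, Real.log_pow]
  have hle : Real.log (2*C+2) ≤ Real.log (2*C+4) :=
    Real.log_le_log (by linarith) (by linarith)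
  have hK : Real.log (((2*((C+1)*r))^d) / (r ^ d)) ≤ d * Real.log (2*C+4) := by
    rw [hlog]
    exact mul_le_mul_of_nonneg_left hle (Nat.cast_nonneg d)
  rw [hHX, hHY, abs_le]
  constructor <;> linarith [le_trans main1 hK, le_trans main2 hK]
end

section
/- Suppose A ⊂ ℝ^d has finite Lebesgue measure m(A) and that g, h : A → [0, e^{−1}] are integrable functions. Let ε = ∫_A |g − h| dm and assume ε > 0. Then |∫_A (g log g − h log h) dm| ≤ −ε log ε + ε log m(A), where the convention 0·log 0 = 0 is used. -/
open MeasureTheory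

lemma aux_mono (a b : ℝ) (hb0 : 0 ≤ b) (hba : b ≤ a) (ha1 : a ≤ Real.exp (-1)) :
    a * Real.log a ≤ b * Real.log b := by
  rcases eq_or_lt_of_le hb0 with hb0' | hb0'
  · rcases eq_or_lt_of_le (hb0.trans hba) with ha0' | ha0'
    · simp [← ha0', ← hb0']
    · have hla : Real.log a ≤ 0 := by
        have := Real.log_le_log ha0' ha1
        simpa using this.trans (by simp [Real.log_exp])
      have : a * Real.log a ≤ 0 := mul_nonpos_of_nonneg_of_nonpos ha0'.le hla
      simpa [← hb0'] using this
  · have ha0' : 0 < a := lt_of_lt_of_le hb0' hba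
    have hla : Real.log a ≤ -1 := by
      calc Real.log a ≤ Real.log (Real.exp (-1)) := Real.log_le_log ha0' ha1
        _ = -1 := Real.log_exp _
    have h1 : (a - b) * Real.log a ≤ (a - b) * (-1) :=
      mul_le_mul_of_nonneg_left hla (by linarith)
    have h2 : Real.log a - Real.log b ≤ a / b - 1 := by
      have := Real.log_le_sub_one_of_pos (show 0 < a / b from div_pos ha0' hb0')
      rwa [Real.log_div (ne_of_gt ha0') (ne_of_gt hb0')] at this
    have h3 : b * (Real.log a - Real.log b) ≤ b * (a / b - 1) :=
      mul_le_mul_of_nonneg_left h2 hb0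
    have h4 : b * (a / b - 1) = a - b := by field_simp
    nlinarith [h1, h3]

lemma aux_subadd (b δ : ℝ) (hb : 0 ≤ b) (hδ : 0 ≤ δ) :
    b * Real.log b + δ * Real.log δ ≤ (b + δ) * Real.log (b + δ) := by
  have h1 : b * Real.log b ≤ b * Real.log (b + δ) := by
    rcases eq_or_lt_of_le hb with hb' | hb'
    · simp [← hb']
    · exact mul_le_mul_of_nonneg_left (Real.log_le_log hb' (by linarith)) hb
  have h2 : δ * Real.log δ ≤ δ * Real.log (b + δ) := by
    rcases eq_or_lt_of_le hδ with hδ' | hδ'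
    · simp [← hδ']
    · exact mul_le_mul_of_nonneg_left (Real.log_le_log hδ' (by linarith)) hδ
  nlinarith [h1, h2]

lemma aux_tlog (t c : ℝ) (ht : 0 ≤ t) (hc : 0 < c) :
    -(t * Real.log t) ≤ 1 / c + t * Real.log c - t := by
  rcases eq_or_lt_of_le ht with ht' | ht'
  · simp [← ht']
    positivity
  · have h := Real.log_le_sub_one_of_pos (show 0 < 1 / (c * t) by positivity)
    rw [Real.log_div one_ne_zero (by positivity), Real.log_one,
      Real.log_mul (ne_of_gt hc) (ne_of_gt ht')] at h
    have h2 : t * (0 - (Real.log c + Real.log t)) ≤ t * (1 / (c * t) - 1) :=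
      mul_le_mul_of_nonneg_left h ht'.le
    have h3 : t * (1 / (c * t)) = 1 / c := by field_simp
    nlinarith [h2, h3]

lemma aux_key (a b c : ℝ) (ha : a ∈ Set.Icc (0 : ℝ) (Real.exp (-1)))
    (hb : b ∈ Set.Icc (0 : ℝ) (Real.exp (-1))) (hc : 0 < c) :
    |a * Real.log a - b * Real.log b| ≤ 1 / c + |a - b| * Real.log c - |a - b| := by
  obtain ⟨ha0, ha1⟩ := ha
  obtain ⟨hb0, hb1⟩ := hb
  wlog hba : b ≤ a generalizing a b
  · have := this b a hb0 hb1 ha0 ha1 (le_of_not_ge hba)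
    rwa [abs_sub_comm (b * Real.log b), abs_sub_comm b a] at this
  have hmono := aux_mono a b hb0 hba ha1
  have habs : |a * Real.log a - b * Real.log b| = b * Real.log b - a * Real.log a := by
    rw [abs_of_nonpos (by linarith)]; ring
  have habs2 : |a - b| = a - b := abs_of_nonneg (by linarith)
  have hsub := aux_subadd b (a - b) hb0 (by linarith)
  have htl := aux_tlog (a - b) c (by linarith) hc
  rw [habs, habs2]
  have : b + (a - b) = a := by ring
  rw [this] at hsub
  linarith

/-- if `A ⊆ ℝ^d` has finite Lebesgue measure, `g h : A → [0, e⁻¹]` are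
integrable, and `ε = ∫_A |g − h| > 0`, then
`|∫_A (g log g − h log h)| ≤ −ε log ε + ε log m(A)`. -/
theorem stmt_8 (d : ℕ) (hd : 1 ≤ d) (A : Set (EuclideanSpace ℝ (Fin d)))
    (hA : MeasurableSet A) (hAfin : volume A ≠ ⊤)
    (g h : EuclideanSpace ℝ (Fin d) → ℝ)
    (hgint : IntegrableOn g A volume) (hhint : IntegrableOn h A volume)
    (hgb : ∀ x ∈ A, g x ∈ Set.Icc (0 : ℝ) (Real.exp (-1)))
    (hhb : ∀ x ∈ A, h x ∈ Set.Icc (0 : ℝ) (Real.exp (-1)))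
    (ε : ℝ) (hε : ε = ∫ x in A, |g x - h x|) (hεpos : 0 < ε) :
    |∫ x in A, (g x * Real.log (g x) - h x * Real.log (h x))| ≤
      -(ε * Real.log ε) + ε * Real.log (volume A).toReal := by
  have hA0 : volume A ≠ 0 := by
    intro h0
    rw [Measure.restrict_eq_zero.mpr h0, integral_zero_measure] at hε
    linarith
  set M : ℝ := (volume A).toReal with hM
  have hMpos : 0 < M := ENNReal.toReal_pos hA0 hAfin
  set c : ℝ := M / ε with hc
  have hcpos : 0 < c := div_pos hMpos hεpos
  have hu : IntegrableOn (fun x => |g x - h x|) A volume := (hgint.sub hhint).abs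
  have hconst : IntegrableOn (fun _ : EuclideanSpace ℝ (Fin d) => 1 / c) A volume :=
    (integrableOn_const_iff (by simp)).mpr (Or.inr hAfin.lt_top)
  have hF : IntegrableOn
      (fun x => 1 / c + |g x - h x| * Real.log c - |g x - h x|) A volume :=
    (hconst.add (hu.mul_const _)).sub hu
  have hbound : |∫ x in A, (g x * Real.log (g x) - h x * Real.log (h x))| ≤
      ∫ x in A, (1 / c + |g x - h x| * Real.log c - |g x - h x|) := by
    have hae : ∀ᵐ x ∂(volume.restrict A),
        ‖g x * Real.log (g x) - h x * Real.log (h x)‖ ≤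
          1 / c + |g x - h x| * Real.log c - |g x - h x| := by
      filter_upwards [ae_restrict_mem hA] with x hx
      simpa using aux_key (g x) (h x) c (hgb x hx) (hhb x hx) hcpos
    calc |∫ x in A, (g x * Real.log (g x) - h x * Real.log (h x))|
        = ‖∫ x in A, (g x * Real.log (g x) - h x * Real.log (h x))‖ := by
          rw [Real.norm_eq_abs]
      _ ≤ _ := norm_integral_le_of_norm_le hF hae
  have hcalc : ∫ x in A, (1 / c + |g x - h x| * Real.log c - |g x - h x|)
      = M * (1 / c) + ε * Real.log c - ε := by
    calc ∫ x in A, (1 / c + |g x - h x| * Real.log c - |g x - h x|)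
        = ∫ x in A, (1 / c + (|g x - h x| * Real.log c - |g x - h x|)) := by
          apply integral_congr_ae; filter_upwards with x; ring
      _ = (∫ _x in A, (1 / c : ℝ)) +
            ∫ x in A, (|g x - h x| * Real.log c - |g x - h x|) :=
          integral_add hconst ((hu.mul_const _).sub hu)
      _ = (∫ _x in A, (1 / c : ℝ)) +
            ((∫ x in A, |g x - h x| * Real.log c) - ∫ x in A, |g x - h x|) := by
          rw [integral_sub (hu.mul_const _) hu]
      _ = M * (1 / c) + (ε * Real.log c - ε) := by
          rw [integral_mul_const, setIntegral_const, measureReal_def, ← hε, smul_eq_mul]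
      _ = M * (1 / c) + ε * Real.log c - ε := by ring
  rw [hcalc] at hbound
  have h1 : M * (1 / c) = ε := by
    rw [hc]; field_simp
  have h2 : Real.log c = Real.log M - Real.log ε := by
    rw [hc, Real.log_div (ne_of_gt hMpos) (ne_of_gt hεpos)]
  rw [h1, h2] at hbound
  linarith [hbound]
end
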